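/- arXiv:2108.01110 — 2 statements merged into one kernel-verified Lean document; each statement's English description precedes it below -/
import Mathlib

section
/- Let Ĥ = [e, H] ∈ ℝ^{N×(n+1)} with e the all-ones vector, μ = (1/N)H^T e, and U = [[1, -μ^T],[0, I_n]]. If Ĥ has full column rank, then the smallest eigenvalue satisfies λ_min(U^T Ĥ^T Ĥ U) ≥ λ_min(Ĥ^T Ĥ). -/
open Matrix

/-- The set of eigenvalues of a real square matrix. -/
noncomputable def eigs {m : ℕ} (A : Matrix (Fin m) (Fin m) ℝ) : Set ℝ :=
  {μ | ∃ v : Fin m → ℝ, v ≠ 0 ∧ A.mulVec v = μ • v}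

noncomputable def lamMax {m : ℕ} (A : Matrix (Fin m) (Fin m) ℝ) : ℝ := sSup (eigs A)

/-- Ĥ = [e, H] : prepend a column of ones to H -/
noncomputable def hatM {N n : ℕ} (H : Matrix (Fin N) (Fin n) ℝ) :
    Matrix (Fin N) (Fin (n + 1)) ℝ :=
  Matrix.of fun i j => Fin.cases (motive := fun _ => ℝ) 1 (fun j' => H i j') j

/-- U = [[1, -μᵀ],[0, I]] : the centering transformation -/
noncomputable def centerU {n : ℕ} (μ : Fin n → ℝ) : Matrix (Fin (n + 1)) (Fin (n + 1)) ℝ :=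
  Matrix.of fun i j =>
    Fin.cases (motive := fun _ => ℝ)
      (Fin.cases (motive := fun _ => ℝ) 1 (fun j' => -μ j') j)
      (fun i' => Fin.cases (motive := fun _ => ℝ) 0 (fun j' => if i' = j' then 1 else 0) j) i


noncomputable def lamMin {m : ℕ} (A : Matrix (Fin m) (Fin m) ℝ) : ℝ := sInf (eigs A)

lemma diag_mulVec_single {m : ℕ} (d : Fin m → ℝ) (i : Fin m) :
    diagonal d *ᵥ Pi.single i 1 = d i • (Pi.single i 1 : Fin m → ℝ) := by
  funext j
  rw [mulVec_diagonal]
  by_cases hij : j = i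
  · subst hij; simp
  · simp [Pi.single_eq_of_ne hij]

lemma eigs_of_decomp {m : ℕ} {Q : Matrix (Fin m) (Fin m) ℝ} {d : Fin m → ℝ}
    (hQ1 : Q * Qᵀ = 1) (hQ2 : Qᵀ * Q = 1) :
    eigs (Q * diagonal d * Qᵀ) = Set.range d := by
  set A : Matrix (Fin m) (Fin m) ℝ := Q * diagonal d * Qᵀ with hAeq
  ext c
  constructor
  · rintro ⟨v, hv, hAv⟩
    set w : Fin m → ℝ := Qᵀ *ᵥ v with hw
    have hwv : Q *ᵥ w = v := by
      rw [hw, mulVec_mulVec, hQ1, one_mulVec]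
    have hwne : w ≠ 0 := by
      intro h
      rw [h, mulVec_zero] at hwv
      exact hv hwv.symm
    have hDw : diagonal d *ᵥ w = c • w := by
      have h1 : diagonal d = Qᵀ * A * Q := by
        rw [hAeq, Matrix.mul_assoc, Matrix.mul_assoc, hQ2, Matrix.mul_one, ← Matrix.mul_assoc,
          hQ2, Matrix.one_mul]
      rw [h1, ← mulVec_mulVec, hwv, ← mulVec_mulVec, hAv, mulVec_smul]
    obtain ⟨i, hi⟩ := Function.ne_iff.mp hwne
    refine ⟨i, ?_⟩
    have h2 := congrFun hDw i
    rw [mulVec_diagonal] at h2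
    simp only [Pi.smul_apply, smul_eq_mul] at h2
    exact mul_right_cancel₀ hi h2
  · rintro ⟨i, rfl⟩
    refine ⟨Q *ᵥ Pi.single i 1, ?_, ?_⟩
    · intro h
      have h3 : (Qᵀ * Q) *ᵥ Pi.single i 1 = 0 := by
        rw [← mulVec_mulVec, h, mulVec_zero]
      rw [hQ2, one_mulVec] at h3
      have := congrFun h3 i
      simp at this
    · have hAQ : A * Q = Q * diagonal d := by
        rw [hAeq, Matrix.mul_assoc, hQ2, Matrix.mul_one]
      rw [mulVec_mulVec, hAQ, ← mulVec_mulVec, diag_mulVec_single, mulVec_smul]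

lemma rayleigh_of_decomp {m : ℕ} {Q : Matrix (Fin m) (Fin m) ℝ} {d : Fin m → ℝ}
    (hQ1 : Q * Qᵀ = 1) (hQ2 : Qᵀ * Q = 1) (v : Fin m → ℝ) :
    lamMin (Q * diagonal d * Qᵀ) * (v ⬝ᵥ v) ≤ v ⬝ᵥ (Q * diagonal d * Qᵀ) *ᵥ v := by
  set A : Matrix (Fin m) (Fin m) ℝ := Q * diagonal d * Qᵀ with hAeq
  have hle : ∀ i, lamMin A ≤ d i := by
    intro i
    rw [lamMin, hAeq, eigs_of_decomp hQ1 hQ2]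
    exact csInf_le (Set.finite_range _).bddBelow ⟨i, rfl⟩
  set w : Fin m → ℝ := Qᵀ *ᵥ v with hw
  have hvv : v ⬝ᵥ v = ∑ i, w i ^ 2 := by
    have h1 : w ⬝ᵥ w = v ⬝ᵥ v := by
      conv_lhs => rw [hw]
      rw [dotProduct_mulVec, vecMul_transpose, mulVec_mulVec, hQ1, one_mulVec]
    rw [← h1, dotProduct]
    exact Finset.sum_congr rfl fun i _ => (sq (w i)).symm
  have hform : v ⬝ᵥ A *ᵥ v = ∑ i, d i * w i ^ 2 := by
    rw [hAeq, ← mulVec_mulVec, ← mulVec_mulVec, ← hw, dotProduct_mulVec, ← mulVec_transpose,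
      ← hw, dotProduct]
    simp only [mulVec_diagonal]
    exact Finset.sum_congr rfl fun i _ => by ring
  rw [hvv, hform, Finset.mul_sum]
  refine Finset.sum_le_sum fun i _ => ?_
  exact mul_le_mul_of_nonneg_right (hle i) (sq_nonneg _)

lemma exists_unitary_diag {m : ℕ} {A : Matrix (Fin m) (Fin m) ℝ} (hA : A.IsHermitian) :
    ∃ Q : Matrix (Fin m) (Fin m) ℝ, Q * Qᵀ = 1 ∧ Qᵀ * Q = 1 ∧
      A = Q * diagonal hA.eigenvalues * Qᵀ := by
  refine ⟨hA.eigenvectorUnitary, ?_, ?_, ?_⟩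
  · have := (Matrix.mem_unitaryGroup_iff).mp hA.eigenvectorUnitary.2
    rwa [Matrix.star_eq_conjTranspose, conjTranspose_eq_transpose_of_trivial] at this
  · have := (Matrix.mem_unitaryGroup_iff').mp hA.eigenvectorUnitary.2
    rwa [Matrix.star_eq_conjTranspose, conjTranspose_eq_transpose_of_trivial] at this
  · have := hA.spectral_theorem
    rw [Unitary.conjStarAlgAut_apply, Matrix.star_eq_conjTranspose, conjTranspose_eq_transpose_of_trivial] at this
    simpa using this

lemma rayleigh {m : ℕ} {A : Matrix (Fin m) (Fin m) ℝ} (hA : A.IsHermitian)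
    (v : Fin m → ℝ) : lamMin A * (v ⬝ᵥ v) ≤ v ⬝ᵥ A *ᵥ v := by
  obtain ⟨Q, hQ1, hQ2, hAeq⟩ := exists_unitary_diag hA
  rw [hAeq]
  exact rayleigh_of_decomp hQ1 hQ2 v

lemma eigs_nonempty {m : ℕ} {A : Matrix (Fin (m + 1)) (Fin (m + 1)) ℝ} (hA : A.IsHermitian) :
    (eigs A).Nonempty := by
  obtain ⟨Q, hQ1, hQ2, hAeq⟩ := exists_unitary_diag hA
  rw [hAeq, eigs_of_decomp hQ1 hQ2]
  exact Set.range_nonempty _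

lemma quad_form {p q : ℕ} (B : Matrix (Fin p) (Fin q) ℝ) (z : Fin q → ℝ) :
    z ⬝ᵥ (Bᵀ * B) *ᵥ z = (B *ᵥ z) ⬝ᵥ (B *ᵥ z) := by
  rw [← mulVec_mulVec, dotProduct_mulVec, vecMul_transpose]

lemma dotProduct_self_nonneg' {p : ℕ} (z : Fin p → ℝ) : 0 ≤ z ⬝ᵥ z :=
  Finset.sum_nonneg fun i _ => mul_self_nonneg (z i)

lemma dotProduct_self_pos' {p : ℕ} {z : Fin p → ℝ} (hz : z ≠ 0) : 0 < z ⬝ᵥ z :=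
  lt_of_le_of_ne (dotProduct_self_nonneg' z)
    (fun h => hz (dotProduct_self_eq_zero.mp h.symm))

lemma hatM_mulVec_cons {N n : ℕ} (H : Matrix (Fin N) (Fin n) ℝ) (c : ℝ) (v : Fin n → ℝ) :
    hatM H *ᵥ Fin.cons c v = fun i => c + ∑ j, H i j * v j := by
  funext i
  simp [hatM, mulVec, dotProduct, Fin.sum_univ_succ]

theorem stmt2 {N n : ℕ} (H : Matrix (Fin N) (Fin n) ℝ)
    (μ : Fin n → ℝ) (hμ : ∀ j, μ j = (1 / (N : ℝ)) * ∑ i, H i j)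
    (hrank : (hatM H).rank = n + 1) :
    lamMin ((centerU μ)ᵀ * (hatM H)ᵀ * hatM H * centerU μ) ≥
      lamMin ((hatM H)ᵀ * hatM H) := by
  set A := hatM H with hA
  have hM : (Aᵀ * A).IsHermitian := by
    have := Matrix.isHermitian_conjTranspose_mul_self A
    rwa [conjTranspose_eq_transpose_of_trivial] at this
  set B := A * centerU μ with hB
  have hM'eq : (centerU μ)ᵀ * Aᵀ * A * centerU μ = Bᵀ * B := by
    rw [hB, Matrix.transpose_mul, Matrix.mul_assoc, Matrix.mul_assoc]
  have hM' : (Bᵀ * B).IsHermitian := by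
    have := Matrix.isHermitian_conjTranspose_mul_self B
    rwa [conjTranspose_eq_transpose_of_trivial] at this
  rw [ge_iff_le, hM'eq, lamMin]
  -- column sums of H
  have hNμ : ∀ j, ∑ i, H i j = (N : ℝ) * μ j := by
    intro j
    rcases Nat.eq_zero_or_pos N with hN | hN
    · subst hN
      simp [hμ j]
    · rw [hμ j]
      field_simp
  -- nonnegativity of lamMin (AᵀA)
  have hlm0 : 0 ≤ lamMin (Aᵀ * A) := by
    rw [lamMin]
    refine le_csInf (eigs_nonempty hM) ?_
    rintro c ⟨u, hu, huev⟩
    have h1 : c * (u ⬝ᵥ u) = (A *ᵥ u) ⬝ᵥ (A *ᵥ u) := by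
      rw [← quad_form, huev, dotProduct_smul, smul_eq_mul]
    have h2 := dotProduct_self_nonneg' (A *ᵥ u)
    have h3 := dotProduct_self_pos' hu
    nlinarith
  refine le_csInf (eigs_nonempty hM') ?_
  rintro b ⟨x, hx, hxev⟩
  set x0 : ℝ := x 0 with hx0
  set v : Fin n → ℝ := fun j => x j.succ with hv
  set s : ℝ := ∑ j, μ j * v j with hs
  -- U *ᵥ x
  have hy : centerU μ *ᵥ x = Fin.cons (x0 - s) v := by
    funext i
    refine Fin.cases ?_ (fun i' => ?_) i
    · simp [centerU, mulVec, dotProduct, Fin.sum_univ_succ, hs, hx0, hv, sub_eq_add_neg,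
        Finset.sum_neg_distrib, neg_mul]
    · simp [centerU, mulVec, dotProduct, Fin.sum_univ_succ, ite_mul, hv]
  -- B *ᵥ x = x0 • e + k where k i = ∑ j H i j v j - s
  set k : Fin N → ℝ := fun i => (∑ j, H i j * v j) - s with hk
  have hBx : B *ᵥ x = fun i => x0 + k i := by
    rw [hB, ← mulVec_mulVec, hy, hA, hatM_mulVec_cons]
    funext i
    simp [hk]
    ring
  have hksum : ∑ i, k i = 0 := by
    have h1 : ∑ i, ∑ j, H i j * v j = (N : ℝ) * s := by
      rw [Finset.sum_comm, hs, Finset.mul_sum]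
      refine Finset.sum_congr rfl fun j _ => ?_
      rw [← Finset.sum_mul, hNμ j]
      ring
    simp [hk, Finset.sum_sub_distrib, h1, Finset.sum_const, Finset.card_univ]
  -- b * (x ⬝ᵥ x) = N x0^2 + ∑ k i^2
  have hmain : b * (x ⬝ᵥ x) = (N : ℝ) * x0 ^ 2 + ∑ i, k i ^ 2 := by
    have h1 : b * (x ⬝ᵥ x) = (B *ᵥ x) ⬝ᵥ (B *ᵥ x) := by
      rw [← quad_form, hxev, dotProduct_smul, smul_eq_mul]
    rw [h1, hBx, dotProduct]
    have h2 : ∑ i, (x0 + k i) * (x0 + k i)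
        = ∑ i, (x0 ^ 2 + 2 * x0 * k i + k i ^ 2) := by
      exact Finset.sum_congr rfl fun i _ => by ring
    rw [h2]
    rw [Finset.sum_add_distrib, Finset.sum_add_distrib, Finset.sum_const, Finset.card_univ,
      ← Finset.mul_sum, hksum]
    simp [mul_comm]
  -- lamMin (AᵀA) ≤ N
  have hNbound : lamMin (Aᵀ * A) * 1 ≤ (N : ℝ) := by
    have h1 := rayleigh hM (Pi.single 0 1)
    have h2 : (Pi.single 0 1 : Fin (n + 1) → ℝ) ⬝ᵥ Pi.single 0 1 = 1 := by
      rw [dotProduct_single]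
      simp
    have h3 : A *ᵥ (Pi.single 0 1 : Fin (n + 1) → ℝ) = fun _ => 1 := by
      funext i
      rw [mulVec_single]
      simp [hA, hatM]
    have h4 : (Pi.single 0 1 : Fin (n + 1) → ℝ) ⬝ᵥ (Aᵀ * A) *ᵥ Pi.single 0 1 = (N : ℝ) := by
      rw [quad_form, h3]
      simp [dotProduct, Finset.card_univ]
    rw [h2] at h1
    rw [h4] at h1
    exact h1
  -- ∑ k i ^ 2 ≥ lamMin (AᵀA) * (v ⬝ᵥ v)
  have hkbound : lamMin (Aᵀ * A) * (v ⬝ᵥ v) ≤ ∑ i, k i ^ 2 := by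
    set w : Fin (n + 1) → ℝ := Fin.cons (-s) v with hw
    have hAw : A *ᵥ w = k := by
      rw [hw, hA, hatM_mulVec_cons]
      funext i
      simp [hk]
      ring
    have h1 := rayleigh hM w
    have h2 : w ⬝ᵥ (Aᵀ * A) *ᵥ w = ∑ i, k i ^ 2 := by
      rw [quad_form, hAw, dotProduct]
      exact Finset.sum_congr rfl fun i _ => (sq (k i)).symm
    have h3 : w ⬝ᵥ w = s ^ 2 + v ⬝ᵥ v := by
      simp [hw, dotProduct, Fin.sum_univ_succ]
      ring
    rw [h2, h3] at h1
    have h4 : lamMin (Aᵀ * A) * (v ⬝ᵥ v) ≤ lamMin (Aᵀ * A) * (s ^ 2 + v ⬝ᵥ v) := by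
      apply mul_le_mul_of_nonneg_left _ hlm0
      nlinarith [sq_nonneg s]
    linarith
  -- x ⬝ᵥ x = x0^2 + v ⬝ᵥ v
  have hxx : x ⬝ᵥ x = x0 ^ 2 + v ⬝ᵥ v := by
    simp [dotProduct, Fin.sum_univ_succ, hx0, hv]
    ring
  have hxxpos : 0 < x ⬝ᵥ x := dotProduct_self_pos' hx
  have hfinal : lamMin (Aᵀ * A) * (x ⬝ᵥ x) ≤ b * (x ⬝ᵥ x) := by
    rw [hmain, hxx]
    have : lamMin (Aᵀ * A) * (x0 ^ 2 + v ⬝ᵥ v)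
        = lamMin (Aᵀ * A) * x0 ^ 2 + lamMin (Aᵀ * A) * (v ⬝ᵥ v) := by ring
    rw [this]
    have h5 : lamMin (Aᵀ * A) * x0 ^ 2 ≤ (N : ℝ) * x0 ^ 2 := by
      apply mul_le_mul_of_nonneg_right _ (sq_nonneg x0)
      linarith
    linarith
  exact le_of_mul_le_mul_right hfinal hxxpos
end

section
/- Let Ĥ = [e, H] ∈ ℝ^{N×(n+1)} with full column rank, μ = (1/N)H^T e, and U = [[1, -μ^T],[0, I_n]]. Then κ(ĤU) ≤ κ(Ĥ), where κ denotes the 2-norm condition number σ_max/σ_min (smallest singular value, which is nonzero since Ĥ and hence ĤU has full column rank). -/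
open Matrix

/-- 2-norm condition number σ_max/σ_min of a full column rank matrix -/
noncomputable def condFull {m n : ℕ} (A : Matrix (Fin m) (Fin n) ℝ) : ℝ :=
  Real.sqrt (lamMax (Aᵀ * A) / lamMin (Aᵀ * A))

lemma eigs_eq_range {m : ℕ} {A : Matrix (Fin m) (Fin m) ℝ} (hA : A.IsHermitian) :
    eigs A = Set.range hA.eigenvalues := by
  ext lam
  constructor
  · rintro ⟨v, hv, hev⟩
    by_contra hlam
    have hdet : (A - lam • 1).det ≠ 0 := by
      have hU := hA.spectral_theorem
      simp only [Unitary.conjStarAlgAut_apply, Unitary.coe_star] at hU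
      have hUu := (Matrix.mem_unitaryGroup_iff).mp (hA.eigenvectorUnitary).2
      set U : Matrix (Fin m) (Fin m) ℝ := ↑hA.eigenvectorUnitary with hUdef
      have hdiag : (Matrix.diagonal (RCLike.ofReal ∘ hA.eigenvalues) : Matrix (Fin m) (Fin m) ℝ)
          - lam • 1 = Matrix.diagonal (fun i => hA.eigenvalues i - lam) := by
        ext i j
        rcases eq_or_ne i j with rfl | hij
        · simp [Matrix.diagonal_apply_eq, Matrix.one_apply_eq]
        · simp [Matrix.diagonal_apply_ne _ hij, Matrix.one_apply_ne hij]
      have key : A - lam • 1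
          = U * ((Matrix.diagonal (fun i => hA.eigenvalues i - lam)) * star U) := by
        calc A - lam • 1
            = U * (diagonal (RCLike.ofReal ∘ hA.eigenvalues) * star U) - lam • (U * star U) := by
              rw [mul_assoc] at hU
              rw [← hU, hUu]
          _ = U * ((diagonal (RCLike.ofReal ∘ hA.eigenvalues) - lam • 1) * star U) := by
              rw [Matrix.sub_mul, Matrix.mul_sub, Matrix.smul_mul, Matrix.one_mul,
                Matrix.mul_smul]
          _ = _ := by rw [hdiag]
      rw [key, Matrix.det_mul, Matrix.det_mul, Matrix.det_diagonal]
      have hdetU : U.det * (star U).det = 1 := by rw [← Matrix.det_mul, hUu, Matrix.det_one]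
      refine mul_ne_zero (left_ne_zero_of_mul_eq_one hdetU)
        (mul_ne_zero ?_ (right_ne_zero_of_mul_eq_one hdetU))
      rw [Finset.prod_ne_zero_iff]
      intro i _
      rw [sub_ne_zero]
      exact fun h => hlam ⟨i, h⟩
    exact hv (Matrix.eq_zero_of_mulVec_eq_zero hdet (by
      rw [Matrix.sub_mulVec, hev]
      simp [Matrix.smul_mulVec]))
  · rintro ⟨i, rfl⟩
    exact ⟨hA.eigenvectorBasis i, fun h => hA.eigenvectorBasis.orthonormal.ne_zero i ((WithLp.ofLp_eq_zero 2).mp h),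
      hA.mulVec_eigenvectorBasis i⟩

lemma eigs_finite {m : ℕ} {A : Matrix (Fin m) (Fin m) ℝ} (hA : A.IsHermitian) :
    (eigs A).Finite := by
  rw [eigs_eq_range hA]; exact Set.finite_range _

lemma rayleigh_bounds {m : ℕ} {A : Matrix (Fin m) (Fin m) ℝ} (hA : A.IsHermitian)
    (v : Fin m → ℝ) :
    lamMin A * (v ⬝ᵥ v) ≤ v ⬝ᵥ (A *ᵥ v) ∧ v ⬝ᵥ (A *ᵥ v) ≤ lamMax A * (v ⬝ᵥ v) := by
  classical
  have hU := hA.spectral_theorem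
  simp only [Unitary.conjStarAlgAut_apply, Unitary.coe_star] at hU
  have hUu := (Matrix.mem_unitaryGroup_iff).mp (hA.eigenvectorUnitary).2
  have hUu' := (Matrix.mem_unitaryGroup_iff').mp (hA.eigenvectorUnitary).2
  set U : Matrix (Fin m) (Fin m) ℝ := ↑hA.eigenvectorUnitary with hUdef
  have hstar : star U = Uᵀ := by
    rw [Matrix.star_eq_conjTranspose, conjTranspose_eq_transpose_of_trivial]
  set w : Fin m → ℝ := v ᵥ* U with hw
  have hDof : (diagonal (RCLike.ofReal ∘ hA.eigenvalues) : Matrix (Fin m) (Fin m) ℝ)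
      = diagonal hA.eigenvalues := rfl
  have hquad : v ⬝ᵥ (A *ᵥ v) = ∑ i, hA.eigenvalues i * (w i)^2 := by
    conv_lhs => rw [hU, hDof]
    rw [← Matrix.mulVec_mulVec, ← Matrix.mulVec_mulVec]
    rw [Matrix.dotProduct_mulVec v U]
    have hsUv : (star U) *ᵥ v = w := by
      rw [hw, ← Matrix.mulVec_transpose, hstar]
    rw [hsUv, ← hw]
    simp [dotProduct, Matrix.mulVec_diagonal, mul_comm, sq, mul_assoc, mul_left_comm]
  have hnorm : v ⬝ᵥ v = ∑ i, (w i)^2 := by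
    have h1 : w ⬝ᵥ w = v ⬝ᵥ v := by
      rw [hw, ← Matrix.mulVec_transpose, Matrix.dotProduct_mulVec, Matrix.vecMul_transpose,
        Matrix.mulVec_mulVec]
      rw [← hstar, hUu, Matrix.one_mulVec]
    rw [← h1]
    simp [dotProduct, sq]
  have hbdd : BddAbove (eigs A) := (eigs_finite hA).bddAbove
  have hbddb : BddBelow (eigs A) := (eigs_finite hA).bddBelow
  have hmem : ∀ i, hA.eigenvalues i ∈ eigs A := by
    intro i; rw [eigs_eq_range hA]; exact ⟨i, rfl⟩
  constructor
  · rw [hquad, hnorm, Finset.mul_sum]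
    apply Finset.sum_le_sum
    intro i _
    exact mul_le_mul_of_nonneg_right (csInf_le hbddb (hmem i)) (sq_nonneg _)
  · rw [hquad, hnorm, Finset.mul_sum]
    apply Finset.sum_le_sum
    intro i _
    exact mul_le_mul_of_nonneg_right (le_csSup hbdd (hmem i)) (sq_nonneg _)

lemma transpose_mul_self_herm {m k : ℕ} (A : Matrix (Fin m) (Fin k) ℝ) :
    (Aᵀ * A).IsHermitian := by
  have := Matrix.isHermitian_conjTranspose_mul_self A
  rwa [Matrix.conjTranspose_eq_transpose_of_trivial] at this

lemma quad_eq {m k : ℕ} (A : Matrix (Fin m) (Fin k) ℝ) (v : Fin k → ℝ) :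
    v ⬝ᵥ ((Aᵀ * A) *ᵥ v) = (A *ᵥ v) ⬝ᵥ (A *ᵥ v) := by
  rw [← Matrix.mulVec_mulVec, Matrix.dotProduct_mulVec, Matrix.vecMul_transpose]

set_option maxHeartbeats 1000000 in
theorem stmt3 {N n : ℕ} (H : Matrix (Fin N) (Fin n) ℝ)
    (μ : Fin n → ℝ) (hμ : ∀ j, μ j = (1 / (N : ℝ)) * ∑ i, H i j)
    (hrank : (hatM H).rank = n + 1) :
    condFull (hatM H * centerU μ) ≤ condFull (hatM H) := by
  classical
  set A := hatM H with hA
  set Ah := hatM H * centerU μ with hAh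
  set B := Aᵀ * A with hB
  set B' := Ahᵀ * Ah with hB'
  have hBh : B.IsHermitian := transpose_mul_self_herm A
  have hB'h : B'.IsHermitian := transpose_mul_self_herm Ah
  -- N is positive
  have hNn : n + 1 ≤ N := by
    have := Matrix.rank_le_card_height (hatM H)
    rw [hrank, Fintype.card_fin] at this
    exact this
  have hNpos : 0 < N := by omega
  have hN0 : (N : ℝ) ≠ 0 := Nat.cast_ne_zero.mpr (by omega)
  -- column sums of H
  have hcolsum : ∀ j, ∑ i, H i j = (N : ℝ) * μ j := by
    intro j
    rw [hμ j]
    field_simp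
  -- mulVec computations
  have hmulA : ∀ (t : ℝ) (x : Fin n → ℝ),
      A *ᵥ (Fin.cons t x) = fun i => t + (H *ᵥ x) i := by
    intro t x
    funext i
    simp [hA, hatM, Matrix.mulVec, dotProduct, Fin.sum_univ_succ]
  have hmulU : ∀ v : Fin (n + 1) → ℝ,
      centerU μ *ᵥ v = Fin.cons (v 0 - μ ⬝ᵥ Fin.tail v) (Fin.tail v) := by
    intro v
    funext i
    refine Fin.cases ?_ ?_ i
    · simp [centerU, Matrix.mulVec, dotProduct, Fin.sum_univ_succ, Fin.tail,
        sub_eq_add_neg, Finset.sum_neg_distrib, neg_mul, Finset.mul_sum]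
    · intro i'
      simp [centerU, Matrix.mulVec, dotProduct, Fin.sum_univ_succ, Fin.tail]
  -- quadratic form identity
  have hsumHx : ∀ x : Fin n → ℝ, ∑ i, (H *ᵥ x) i = (N : ℝ) * (μ ⬝ᵥ x) := by
    intro x
    simp only [Matrix.mulVec, dotProduct]
    rw [Finset.sum_comm]
    rw [Finset.mul_sum]
    apply Finset.sum_congr rfl
    intro j _
    rw [← Finset.sum_mul, hcolsum j]
    ring
  have hsq : ∀ (t : ℝ) (y : Fin N → ℝ),
      (fun i => t + y i) ⬝ᵥ (fun i => t + y i)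
        = (N : ℝ) * (t * t) + 2 * t * (∑ i, y i) + y ⬝ᵥ y := by
    intro t y
    simp only [dotProduct]
    have hcong : ∀ i ∈ Finset.univ, (t + y i) * (t + y i)
        = t * t + (2 * t * y i + y i * y i) := fun i _ => by ring
    rw [Finset.sum_congr rfl hcong, Finset.sum_add_distrib, Finset.sum_add_distrib,
      Finset.sum_const, Finset.card_univ, Fintype.card_fin, ← Finset.mul_sum, nsmul_eq_mul]
    ring
  have hg : ∀ (t : ℝ) (x : Fin n → ℝ),
      (A *ᵥ Fin.cons t x) ⬝ᵥ (A *ᵥ Fin.cons t x)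
        = (N : ℝ) * (t * t) + 2 * t * ((N : ℝ) * (μ ⬝ᵥ x)) + (H *ᵥ x) ⬝ᵥ (H *ᵥ x) := by
    intro t x
    rw [hmulA, hsq, hsumHx]
  -- cons dot products
  have hconsdot : ∀ (t : ℝ) (x : Fin n → ℝ),
      (Fin.cons t x : Fin (n + 1) → ℝ) ⬝ᵥ (Fin.cons t x) = t * t + x ⬝ᵥ x := by
    intro t x
    simp [dotProduct, Fin.sum_univ_succ, sq]
  -- Rayleigh abbreviations
  set a := lamMax B with ha
  set b := lamMin B with hb
  have hray := rayleigh_bounds hBh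
  -- N ≤ a and b ≤ N
  have hqB : ∀ w, w ⬝ᵥ (B *ᵥ w) = (A *ᵥ w) ⬝ᵥ (A *ᵥ w) := fun w => quad_eq A w
  have hg10 : (A *ᵥ Fin.cons 1 (0 : Fin n → ℝ)) ⬝ᵥ (A *ᵥ Fin.cons 1 (0 : Fin n → ℝ))
      = (N : ℝ) := by
    rw [hg]
    simp [dotProduct]
  have hNlea : (N : ℝ) ≤ a := by
    have := (hray (Fin.cons 1 (0 : Fin n → ℝ))).2
    rw [hqB, hg10, hconsdot] at this
    simpa using this
  have hbleN : b ≤ (N : ℝ) := by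
    have := (hray (Fin.cons 1 (0 : Fin n → ℝ))).1
    rw [hqB, hg10, hconsdot] at this
    simpa using this
  -- b > 0 from full rank
  have hAinj : ∀ v : Fin (n + 1) → ℝ, A *ᵥ v = 0 → v = 0 := by
    intro v hv
    have hker : LinearMap.ker A.mulVecLin = ⊥ := by
      have h1 : A.rank = n + 1 := hrank
      have h2 := LinearMap.finrank_range_add_finrank_ker A.mulVecLin
      rw [Matrix.rank] at h1
      rw [h1] at h2
      simp only [Module.finrank_pi, Fintype.card_fin] at h2
      have h3 : Module.finrank ℝ (LinearMap.ker A.mulVecLin) = 0 := by omega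
      exact Submodule.finrank_eq_zero.mp h3
    have : v ∈ LinearMap.ker A.mulVecLin := by
      rw [LinearMap.mem_ker, Matrix.mulVecLin_apply]
      exact hv
    rwa [hker, Submodule.mem_bot] at this
  have dp_self_pos : ∀ {k : ℕ} (v : Fin k → ℝ), v ≠ 0 → 0 < v ⬝ᵥ v := by
    intro k v hv
    have h1 : v ⬝ᵥ v ≠ 0 := fun hh => hv (dotProduct_self_eq_zero.mp hh)
    have h2 : 0 ≤ v ⬝ᵥ v := Finset.sum_nonneg fun i _ => mul_self_nonneg _
    exact lt_of_le_of_ne h2 (Ne.symm h1)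
  have hbpos : 0 < b := by
    have hne : (eigs B).Nonempty := by
      rw [eigs_eq_range hBh]; exact Set.range_nonempty _
    have hmem : b ∈ eigs B := hne.csInf_mem (eigs_finite hBh)
    obtain ⟨v, hv0, hev⟩ := hmem
    have hvv : 0 < v ⬝ᵥ v := dp_self_pos v hv0
    have h1 : b * (v ⬝ᵥ v) = (A *ᵥ v) ⬝ᵥ (A *ᵥ v) := by
      rw [← hqB, hev, dotProduct_smul, smul_eq_mul]
    have h2 : 0 < (A *ᵥ v) ⬝ᵥ (A *ᵥ v) :=
      dp_self_pos _ (fun h => hv0 (hAinj v h))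
    nlinarith [h1, h2, hvv]
  have key : ∀ lam ∈ eigs B', b ≤ lam ∧ lam ≤ a := by
    rintro lam ⟨v, hv0, hev⟩
    set x : Fin n → ℝ := Fin.tail v with hx
    set t0 : ℝ := v 0 with ht0
    set s : ℝ := μ ⬝ᵥ x with hs
    have hvcons : v = Fin.cons t0 x := (Fin.cons_self_tail v).symm
    have hAhv : Ah *ᵥ v = A *ᵥ (Fin.cons (t0 - s) x) := by
      rw [hAh, ← Matrix.mulVec_mulVec, hmulU v]
    have hquadv : lam * (v ⬝ᵥ v) = (Ah *ᵥ v) ⬝ᵥ (Ah *ᵥ v) := by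
      rw [← quad_eq Ah v, hev, dotProduct_smul, smul_eq_mul]
    have hvv : v ⬝ᵥ v = t0 * t0 + x ⬝ᵥ x := by
      conv_lhs => rw [hvcons]
      exact hconsdot t0 x
    have hval : (Ah *ᵥ v) ⬝ᵥ (Ah *ᵥ v)
        = (N : ℝ) * (t0 * t0) - (N : ℝ) * (s * s) + (H *ᵥ x) ⬝ᵥ (H *ᵥ x) := by
      rw [hAhv, hg]; ring
    have hQa : (H *ᵥ x) ⬝ᵥ (H *ᵥ x) ≤ a * (x ⬝ᵥ x) := by
      have h := (hray (Fin.cons 0 x)).2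
      rw [hqB, hg, hconsdot] at h
      simpa using h
    have hQb : b * (s * s) + b * (x ⬝ᵥ x) ≤ (H *ᵥ x) ⬝ᵥ (H *ᵥ x) - (N : ℝ) * (s * s) := by
      have h := (hray (Fin.cons (-s) x)).1
      rw [hqB, hg, hconsdot] at h
      nlinarith [h]
    have hx2 : 0 ≤ x ⬝ᵥ x := Finset.sum_nonneg fun i _ => mul_self_nonneg _
    have hs2 : 0 ≤ s * s := mul_self_nonneg s
    have ht2 : 0 ≤ t0 * t0 := mul_self_nonneg t0
    have hvvpos : 0 < v ⬝ᵥ v := dp_self_pos v hv0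
    have hN0' : (0 : ℝ) ≤ N := Nat.cast_nonneg N
    constructor
    · have hle : b * (v ⬝ᵥ v) ≤ lam * (v ⬝ᵥ v) := by
        rw [hquadv, hval, hvv]
        nlinarith [mul_nonneg (sub_nonneg.mpr hbleN) ht2, mul_nonneg hbpos.le hs2, hQb]
      exact le_of_mul_le_mul_right hle hvvpos
    · have hle : lam * (v ⬝ᵥ v) ≤ a * (v ⬝ᵥ v) := by
        rw [hquadv, hval, hvv]
        nlinarith [mul_nonneg (sub_nonneg.mpr hNlea) ht2, mul_nonneg hN0' hs2, hQa]
      exact le_of_mul_le_mul_right hle hvvpos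
  have hne' : (eigs B').Nonempty := by
    rw [eigs_eq_range hB'h]; exact Set.range_nonempty _
  have hmax : lamMax B' ≤ a := csSup_le hne' fun lam h => (key lam h).2
  have hmin : b ≤ lamMin B' := le_csInf hne' fun lam h => (key lam h).1
  have e1 : condFull Ah = Real.sqrt (lamMax B' / lamMin B') := rfl
  have e2 : condFull A = Real.sqrt (lamMax B / lamMin B) := rfl
  rw [e1, e2]
  apply Real.sqrt_le_sqrt
  exact div_le_div₀ (le_trans (Nat.cast_nonneg N) hNlea) hmax hbpos hmin
end
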